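/- Let g : ℤᵈ → [0,∞) be even with g(0) = 0 and suppose G₂ := g satisfies g(x) ≥ 1 for all x ≠ 0 and b := Π_{x ≠ 0} g(x) < ∞ (the product over x with g(x) ≠ 1 converges). For a finite Λ ⊂ ℤᵈ, a subset ξ ⊂ Λ, and 0 ≤ ρ ≤ 1/b, the signed sum Ξ(ξ) = Σ_{γ ⊂ Λ∖ξ} (−ρ)^{|γ|} Π_{y∈γ, x∈γ∖{y}} g(x−y)^{1/2} Π_{r∈ξ, y∈γ} g(r−y) is nonnegative. -/
import Mathlib

namespace LeeYangAux
noncomputable section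

variable {d : ℕ}

/-- `cf g T s = ∏_{r ∈ T} g (r - s)`. -/
def cf (g : (Fin d → ℤ) → ℝ) (T : Finset (Fin d → ℤ)) (s : Fin d → ℤ) : ℝ :=
  ∏ r ∈ T, g (r - s)

def Wf (g : (Fin d → ℤ) → ℝ) (γ : Finset (Fin d → ℤ)) : ℝ :=
  ∏ y ∈ γ, ∏ x ∈ γ.erase y, Real.sqrt (g (x - y))

def Pf (g : (Fin d → ℤ) → ℝ) (ξ γ : Finset (Fin d → ℤ)) : ℝ :=
  ∏ r ∈ ξ, ∏ y ∈ γ, g (r - y)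

def term (g : (Fin d → ℤ) → ℝ) (ρ : ℝ) (ξ γ : Finset (Fin d → ℤ))
    (L : List ((Fin d → ℤ) × Finset (Fin d → ℤ))) : ℝ :=
  (-ρ) ^ γ.card * Wf g γ * Pf g ξ γ *
    (L.map fun p => 1 - ρ * cf g (γ ∪ p.2) p.1).prod

def E (g : (Fin d → ℤ) → ℝ) (ρ : ℝ) (ξ A : Finset (Fin d → ℤ))
    (L : List ((Fin d → ℤ) × Finset (Fin d → ℤ))) : ℝ :=
  ∑ γ ∈ A.powerset, term g ρ ξ γ L

lemma cf_nonneg (g : (Fin d → ℤ) → ℝ) (hg0 : ∀ x, 0 ≤ g x) (T : Finset (Fin d → ℤ))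
    (s : Fin d → ℤ) : 0 ≤ cf g T s :=
  Finset.prod_nonneg fun _ _ => hg0 _

lemma cf_le_b (g : (Fin d → ℤ) → ℝ) (b : ℝ)
    (hb : ∀ S : Finset (Fin d → ℤ), (0 : Fin d → ℤ) ∉ S → ∏ x ∈ S, g x ≤ b)
    (T : Finset (Fin d → ℤ)) (s : Fin d → ℤ) (hs : s ∉ T) : cf g T s ≤ b := by
  have hinj : Set.InjOn (fun r => r - s) T := fun a _ c _ h => by
    simpa using congrArg (fun z => z + s) h
  have h0 : (0 : Fin d → ℤ) ∉ T.image (fun r => r - s) := by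
    simp only [Finset.mem_image, not_exists]
    rintro r ⟨hr, h⟩
    exact hs (by simpa [sub_eq_zero.mp h] using hr)
  have := hb (T.image (fun r => r - s)) h0
  rwa [Finset.prod_image (fun a ha c hc h => hinj ha hc h)] at this

lemma cf_union_insert (g : (Fin d → ℤ) → ℝ) (γ U : Finset (Fin d → ℤ))
    (w s : Fin d → ℤ) (hw : w ∉ γ ∪ U) :
    cf g (γ ∪ insert w U) s = g (w - s) * cf g (γ ∪ U) s := by
  have : γ ∪ insert w U = insert w (γ ∪ U) := by
    ext a; simp [Finset.mem_insert, Finset.mem_union, or_left_comm, or_comm, or_assoc]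
  rw [this, cf, Finset.prod_insert hw]; rfl

lemma cf_union (g : (Fin d → ℤ) → ℝ) (γ U : Finset (Fin d → ℤ)) (s : Fin d → ℤ)
    (h : Disjoint γ U) : cf g (γ ∪ U) s = cf g γ s * cf g U s := by
  rw [cf, Finset.prod_union h]; rfl

lemma Wf_insert (g : (Fin d → ℤ) → ℝ) (hg0 : ∀ x, 0 ≤ g x) (heven : ∀ x, g (-x) = g x)
    (γ : Finset (Fin d → ℤ)) (r₀ : Fin d → ℤ) (hr : r₀ ∉ γ) :
    Wf g (insert r₀ γ) = Wf g γ * cf g γ r₀ := by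
  rw [Wf, Finset.prod_insert hr, Finset.erase_insert hr]
  have h2 : ∀ y ∈ γ, (∏ x ∈ (insert r₀ γ).erase y, Real.sqrt (g (x - y)))
      = Real.sqrt (g (r₀ - y)) * ∏ x ∈ γ.erase y, Real.sqrt (g (x - y)) := by
    intro y hy
    have hne : y ≠ r₀ := fun h => hr (h ▸ hy)
    rw [Finset.erase_insert_of_ne hne.symm,
      Finset.prod_insert (fun h => hr (Finset.mem_of_mem_erase h))]
  rw [Finset.prod_congr rfl h2, Finset.prod_mul_distrib]
  have h3 : ∀ y ∈ γ, Real.sqrt (g (y - r₀)) * Real.sqrt (g (r₀ - y)) = g (y - r₀) := by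
    intro y _
    have : g (r₀ - y) = g (y - r₀) := by rw [← heven (y - r₀)]; ring_nf
    rw [this, Real.mul_self_sqrt (hg0 _)]
  calc (∏ x ∈ γ, Real.sqrt (g (x - r₀))) * ((∏ y ∈ γ, Real.sqrt (g (r₀ - y))) * Wf g γ)
      = Wf g γ * ∏ y ∈ γ, (Real.sqrt (g (y - r₀)) * Real.sqrt (g (r₀ - y))) := by
        rw [Finset.prod_mul_distrib]; ring
    _ = Wf g γ * cf g γ r₀ := by rw [Finset.prod_congr rfl h3]; rfl

lemma Pf_insert_right (g : (Fin d → ℤ) → ℝ) (ξ γ : Finset (Fin d → ℤ))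
    (r₀ : Fin d → ℤ) (hr : r₀ ∉ γ) :
    Pf g ξ (insert r₀ γ) = Pf g ξ γ * cf g ξ r₀ := by
  rw [Pf, Pf, cf, ← Finset.prod_mul_distrib]
  exact Finset.prod_congr rfl fun r _ => by rw [Finset.prod_insert hr]; ring

lemma Pf_insert_left (g : (Fin d → ℤ) → ℝ) (heven : ∀ x, g (-x) = g x)
    (ξ γ : Finset (Fin d → ℤ)) (t : Fin d → ℤ) (ht : t ∉ ξ) :
    Pf g (insert t ξ) γ = Pf g ξ γ * cf g γ t := by
  rw [Pf, Finset.prod_insert ht, Pf, cf, mul_comm]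
  congr 1
  exact Finset.prod_congr rfl fun y _ => by rw [← heven (y - t)]; ring_nf


lemma term_insert (g : (Fin d → ℤ) → ℝ) (hg0 : ∀ x, 0 ≤ g x) (heven : ∀ x, g (-x) = g x)
    (ρ : ℝ) (ξ γ : Finset (Fin d → ℤ)) (L : List ((Fin d → ℤ) × Finset (Fin d → ℤ)))
    (r₀ : Fin d → ℤ) (hrγ : r₀ ∉ γ) (hrξ : r₀ ∉ ξ) :
    term g ρ ξ (insert r₀ γ) L
      = -ρ * cf g ξ r₀ * term g ρ (insert r₀ ξ) γ (L.map fun p => (p.1, insert r₀ p.2)) := by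
  have hprod : (L.map fun p => 1 - ρ * cf g (insert r₀ γ ∪ p.2) p.1)
      = ((L.map fun p => (p.1, insert r₀ p.2)).map fun p => 1 - ρ * cf g (γ ∪ p.2) p.1) := by
    rw [List.map_map]
    exact List.map_congr_left fun p _ => by
      simp only [Function.comp]
      rw [Finset.insert_union, Finset.union_insert]
  rw [term, term, hprod, Finset.card_insert_of_notMem hrγ, pow_succ,
    Wf_insert g hg0 heven γ r₀ hrγ, Pf_insert_right g ξ γ r₀ hrγ,
    Pf_insert_left g heven ξ γ r₀ hrξ]
  ring

lemma term_append (g : (Fin d → ℤ) → ℝ) (heven : ∀ x, g (-x) = g x)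
    (ρ : ℝ) (ξ γ V : Finset (Fin d → ℤ)) (L : List ((Fin d → ℤ) × Finset (Fin d → ℤ)))
    (t : Fin d → ℤ) (hdisj : Disjoint γ V) (ht : t ∉ ξ) :
    term g ρ ξ γ (L ++ [(t, V)])
      = term g ρ ξ γ L - ρ * cf g V t * term g ρ (insert t ξ) γ L := by
  rw [term, term, term, List.map_append, List.prod_append, List.map_singleton,
    List.prod_singleton, cf_union g γ V t hdisj, Pf_insert_left g heven ξ γ t ht]
  ring

lemma term_M (g : (Fin d → ℤ) → ℝ) (heven : ∀ x, g (-x) = g x)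
    (ρ : ℝ) (ξ γ U : Finset (Fin d → ℤ))
    (L₁ L₂ : List ((Fin d → ℤ) × Finset (Fin d → ℤ)))
    (s w : Fin d → ℤ) (hs : s ∉ ξ) (hw : w ∉ γ ∪ U) (hdisj : Disjoint γ U) :
    term g ρ ξ γ (L₁ ++ (s, U) :: L₂)
      = term g ρ ξ γ (L₁ ++ (s, insert w U) :: L₂)
        + ρ * cf g U s * (g (w - s) - 1) * term g ρ (insert s ξ) γ (L₁ ++ L₂) := by
  rw [term, term, term]
  simp only [List.map_append, List.map_cons, List.prod_append, List.prod_cons]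
  rw [cf_union_insert g γ U w s hw, cf_union g γ U s hdisj,
    Pf_insert_left g heven ξ γ s hs]
  ring


lemma E_step (g : (Fin d → ℤ) → ℝ) (hg0 : ∀ x, 0 ≤ g x) (heven : ∀ x, g (-x) = g x)
    (ρ : ℝ) (ξ A : Finset (Fin d → ℤ)) (L : List ((Fin d → ℤ) × Finset (Fin d → ℤ)))
    (r₀ : Fin d → ℤ) (hmem : r₀ ∈ A) (hrξ : r₀ ∉ ξ) :
    E g ρ ξ A L = E g ρ ξ (A.erase r₀) L
      - ρ * cf g ξ r₀ *
        E g ρ (insert r₀ ξ) (A.erase r₀) (L.map fun p => (p.1, insert r₀ p.2)) := by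
  have hA : A = insert r₀ (A.erase r₀) := (Finset.insert_erase hmem).symm
  conv_lhs => rw [E, hA, Finset.sum_powerset_insert (Finset.notMem_erase r₀ A)]
  have h2 : ∀ γ ∈ (A.erase r₀).powerset,
      term g ρ ξ (insert r₀ γ) L
        = -ρ * cf g ξ r₀ *
            term g ρ (insert r₀ ξ) γ (L.map fun p => (p.1, insert r₀ p.2)) := by
    intro γ hγ
    exact term_insert g hg0 heven ρ ξ γ L r₀
      (fun h => Finset.notMem_erase r₀ A (Finset.mem_powerset.mp hγ h)) hrξ
  rw [Finset.sum_congr rfl h2, ← Finset.mul_sum, E, E]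
  ring

lemma E_append (g : (Fin d → ℤ) → ℝ) (heven : ∀ x, g (-x) = g x)
    (ρ : ℝ) (ξ A V : Finset (Fin d → ℤ)) (L : List ((Fin d → ℤ) × Finset (Fin d → ℤ)))
    (t : Fin d → ℤ) (hV : Disjoint A V) (ht : t ∉ ξ) :
    E g ρ ξ A (L ++ [(t, V)])
      = E g ρ ξ A L - ρ * cf g V t * E g ρ (insert t ξ) A L := by
  rw [E, E, E, Finset.mul_sum, ← Finset.sum_sub_distrib]
  exact Finset.sum_congr rfl fun γ hγ =>
    term_append g heven ρ ξ γ V L t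
      (Finset.disjoint_of_subset_left (Finset.mem_powerset.mp hγ) hV) ht

lemma E_M (g : (Fin d → ℤ) → ℝ) (heven : ∀ x, g (-x) = g x)
    (ρ : ℝ) (ξ A U : Finset (Fin d → ℤ))
    (L₁ L₂ : List ((Fin d → ℤ) × Finset (Fin d → ℤ)))
    (s w : Fin d → ℤ) (hs : s ∉ ξ) (hwA : w ∉ A) (hwU : w ∉ U) (hdisj : Disjoint A U) :
    E g ρ ξ A (L₁ ++ (s, U) :: L₂)
      = E g ρ ξ A (L₁ ++ (s, insert w U) :: L₂)
        + ρ * cf g U s * (g (w - s) - 1) * E g ρ (insert s ξ) A (L₁ ++ L₂) := by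
  rw [E, E, E, Finset.mul_sum, ← Finset.sum_add_distrib]
  refine Finset.sum_congr rfl fun γ hγ => ?_
  have hγA := Finset.mem_powerset.mp hγ
  refine term_M g heven ρ ξ γ U L₁ L₂ s w hs ?_
    (Finset.disjoint_of_subset_left hγA hdisj)
  simp only [Finset.mem_union, not_or]
  exact ⟨fun h => hwA (hγA h), hwU⟩


def Valid (ξ A : Finset (Fin d → ℤ)) (L : List ((Fin d → ℤ) × Finset (Fin d → ℤ))) : Prop :=
  Disjoint ξ A ∧ (∀ p ∈ L, p.1 ∉ A ∧ p.1 ∉ p.2 ∧ p.1 ∉ ξ ∧ Disjoint p.2 A) ∧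
    L.Pairwise (fun p q => p.1 ≠ q.1)

lemma E_empty_nonneg (g : (Fin d → ℤ) → ℝ) (hg0 : ∀ x, 0 ≤ g x) (b ρ : ℝ)
    (hb : ∀ S : Finset (Fin d → ℤ), (0 : Fin d → ℤ) ∉ S → ∏ x ∈ S, g x ≤ b)
    (hρ0 : 0 ≤ ρ) (hρb1 : ρ * b ≤ 1)
    (ξ : Finset (Fin d → ℤ)) (L : List ((Fin d → ℤ) × Finset (Fin d → ℤ)))
    (hL : ∀ p ∈ L, p.1 ∉ p.2) : 0 ≤ E g ρ ξ ∅ L := by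
  rw [E, Finset.powerset_empty, Finset.sum_singleton, term]
  have h1 : Wf g (∅ : Finset (Fin d → ℤ)) = 1 := by simp [Wf]
  have h2 : Pf g ξ (∅ : Finset (Fin d → ℤ)) = 1 := by simp [Pf]
  rw [h1, h2]
  simp only [Finset.card_empty, pow_zero, one_mul, Finset.empty_union]
  refine List.prod_nonneg ?_
  intro x hx
  simp only [List.mem_map] at hx
  obtain ⟨p, hp, rfl⟩ := hx
  have hcf : cf g p.2 p.1 ≤ b := cf_le_b g b hb p.2 p.1 (hL p hp)
  have : ρ * cf g p.2 p.1 ≤ ρ * b := mul_le_mul_of_nonneg_left hcf hρ0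
  linarith

lemma E_mono (g : (Fin d → ℤ) → ℝ) (hg0 : ∀ x, 0 ≤ g x) (heven : ∀ x, g (-x) = g x)
    (hg1 : ∀ x, x ≠ 0 → 1 ≤ g x) (ρ : ℝ) (hρ0 : 0 ≤ ρ)
    (A : Finset (Fin d → ℤ)) (r₀ : Fin d → ℤ) (hr₀A : r₀ ∉ A)
    (hIH : ∀ ξ' L', Valid ξ' A L' → 0 ≤ E g ρ ξ' A L') :
    ∀ (L₂ L₁ : List ((Fin d → ℤ) × Finset (Fin d → ℤ))) (ξ : Finset (Fin d → ℤ)),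
      Valid ξ A (L₁ ++ L₂) → (∀ p ∈ L₂, p.1 ≠ r₀ ∧ r₀ ∉ p.2) →
      E g ρ ξ A (L₁ ++ L₂.map fun p => (p.1, insert r₀ p.2)) ≤ E g ρ ξ A (L₁ ++ L₂) := by
  intro L₂
  induction L₂ with
  | nil => intro L₁ ξ _ _; simp
  | cons p t ihl =>
    intro L₁ ξ hV hr
    obtain ⟨s, U⟩ := p
    obtain ⟨hdisj, hmem, hpw⟩ := hV
    have hsU : (s, U) ∈ L₁ ++ (s, U) :: t := by simp
    obtain ⟨hsA, hsU2, hsξ, hUA⟩ := hmem _ hsU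
    obtain ⟨hsr, hrU⟩ := hr (s, U) (by simp)
    -- Step A: replace (s, U) by (s, insert r₀ U) costs a nonnegative amount
    have eM := E_M g heven ρ ξ A U L₁ t s r₀ hsξ hr₀A hrU hUA.symm
    have hvalid2 : Valid (insert s ξ) A (L₁ ++ t) := by
      refine ⟨Finset.disjoint_insert_left.mpr ⟨hsA, hdisj⟩, ?_, ?_⟩
      · intro q hq
        have hq' : q ∈ L₁ ++ (s, U) :: t := by
          rcases List.mem_append.mp hq with h | h
          · exact List.mem_append.mpr (Or.inl h)
          · exact List.mem_append.mpr (Or.inr (List.mem_cons_of_mem _ h))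
        obtain ⟨h1, h2, h3, h4⟩ := hmem q hq'
        have hqs : q.1 ≠ s := by
          rcases List.mem_append.mp hq with h | h
          · exact (List.pairwise_append.mp hpw).2.2 q h (s, U) (by simp)
          · exact fun hh =>
              (List.pairwise_cons.mp (List.pairwise_append.mp hpw).2.1).1 q h (hh ▸ rfl)
        exact ⟨h1, h2, by simp [Finset.mem_insert, hqs, h3], h4⟩
      · exact hpw.sublist (List.Sublist.append_left (List.sublist_cons_self _ _) L₁)
    have hcorr : 0 ≤ ρ * cf g U s * (g (r₀ - s) - 1) * E g ρ (insert s ξ) A (L₁ ++ t) := by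
      have h1 : (0:ℝ) ≤ g (r₀ - s) - 1 := by
        have hne : r₀ - s ≠ 0 := sub_ne_zero.mpr (Ne.symm hsr)
        have := hg1 (r₀ - s) hne
        linarith
      exact mul_nonneg (mul_nonneg (mul_nonneg hρ0 (cf_nonneg g hg0 U s)) h1)
        (hIH _ _ hvalid2)
    have stepA : E g ρ ξ A (L₁ ++ (s, insert r₀ U) :: t) ≤ E g ρ ξ A (L₁ ++ (s, U) :: t) := by
      rw [eM]; linarith
    -- Step B: recurse on the tail
    have hvalid3 : Valid ξ A (L₁ ++ (s, insert r₀ U) :: t) := by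
      refine ⟨hdisj, ?_, ?_⟩
      · intro q hq
        rcases List.mem_append.mp hq with h | h
        · exact hmem q (List.mem_append.mpr (Or.inl h))
        · rcases List.mem_cons.mp h with rfl | h
          · refine ⟨hsA, ?_, hsξ, ?_⟩
            · simp only [Finset.mem_insert, not_or]; exact ⟨hsr, hsU2⟩
            · exact Finset.disjoint_insert_left.mpr ⟨hr₀A, hUA⟩
          · exact hmem q (List.mem_append.mpr (Or.inr (List.mem_cons_of_mem _ h)))
      · have : List.Pairwise (fun p q => p.1 ≠ q.1) (L₁ ++ (s, U) :: t) := hpw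
        rw [List.pairwise_append] at this ⊢
        refine ⟨this.1, ?_, ?_⟩
        · rw [List.pairwise_cons] at this ⊢
          exact ⟨this.2.1.1, this.2.1.2⟩
        · intro a ha b hb
          rcases List.mem_cons.mp hb with rfl | hb
          · exact this.2.2 a ha (s, U) (by simp)
          · exact this.2.2 a ha b (by simp [hb])
    have stepB := ihl (L₁ ++ [(s, insert r₀ U)]) ξ (by simpa using hvalid3)
      (fun q hq => hr q (List.mem_cons_of_mem _ hq))
    simp only [List.append_assoc, List.singleton_append] at stepB
    calc E g ρ ξ A (L₁ ++ ((s, U) :: t).map fun p => (p.1, insert r₀ p.2))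
        = E g ρ ξ A (L₁ ++ (s, insert r₀ U) :: t.map fun p => (p.1, insert r₀ p.2)) := by
          simp
      _ ≤ E g ρ ξ A (L₁ ++ (s, insert r₀ U) :: t) := stepB
      _ ≤ E g ρ ξ A (L₁ ++ (s, U) :: t) := stepA


lemma E_nonneg (g : (Fin d → ℤ) → ℝ) (hg0 : ∀ x, 0 ≤ g x) (heven : ∀ x, g (-x) = g x)
    (hg1 : ∀ x, x ≠ 0 → 1 ≤ g x) (b ρ : ℝ)
    (hb : ∀ S : Finset (Fin d → ℤ), (0 : Fin d → ℤ) ∉ S → ∏ x ∈ S, g x ≤ b)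
    (hρ0 : 0 ≤ ρ) (hρb1 : ρ * b ≤ 1) :
    ∀ (n : ℕ) (A : Finset (Fin d → ℤ)), A.card ≤ n →
      ∀ (ξ : Finset (Fin d → ℤ)) (L : List ((Fin d → ℤ) × Finset (Fin d → ℤ))),
        Valid ξ A L → 0 ≤ E g ρ ξ A L := by
  intro n
  induction n with
  | zero =>
    intro A hA ξ L hV
    have : A = ∅ := Finset.card_eq_zero.mp (Nat.le_zero.mp hA)
    subst this
    exact E_empty_nonneg g hg0 b ρ hb hρ0 hρb1 ξ L fun p hp => (hV.2.1 p hp).2.1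
  | succ n ih =>
    intro A hA ξ L hV
    rcases A.eq_empty_or_nonempty with rfl | ⟨r₀, hr₀⟩
    · exact E_empty_nonneg g hg0 b ρ hb hρ0 hρb1 ξ L fun p hp => (hV.2.1 p hp).2.1
    obtain ⟨hdisj, hmem, hpw⟩ := hV
    set A' := A.erase r₀ with hA'def
    have hA' : A'.card ≤ n := by
      rw [hA'def, Finset.card_erase_of_mem hr₀]
      omega
    have hr₀A' : r₀ ∉ A' := Finset.notMem_erase r₀ A
    have hrξ : r₀ ∉ ξ := Finset.disjoint_right.mp hdisj hr₀
    have hsub : A' ⊆ A := Finset.erase_subset r₀ A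
    have hIH : ∀ ξ' L', Valid ξ' A' L' → 0 ≤ E g ρ ξ' A' L' := fun ξ' L' h => ih A' hA' ξ' L' h
    -- identity 1: peel r₀ from the domain
    have e1 := E_step g hg0 heven ρ ξ A L r₀ hr₀ hrξ
    -- identity 2: append the pair (r₀, ξ)
    have e2 := E_append g heven ρ ξ A' ξ L r₀
      (Finset.disjoint_of_subset_left hsub hdisj.symm) hrξ
    -- monotonicity
    have hVins : Valid (insert r₀ ξ) A' L := by
      refine ⟨Finset.disjoint_insert_left.mpr ⟨hr₀A', Finset.disjoint_of_subset_right hsub hdisj⟩,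
        ?_, hpw⟩
      intro p hp
      obtain ⟨h1, h2, h3, h4⟩ := hmem p hp
      refine ⟨fun h => h1 (hsub h), h2, ?_, Finset.disjoint_of_subset_right hsub h4⟩
      simp only [Finset.mem_insert, not_or]
      exact ⟨fun h => h1 (h ▸ hr₀), h3⟩
    have e3 : E g ρ (insert r₀ ξ) A' (L.map fun p => (p.1, insert r₀ p.2))
        ≤ E g ρ (insert r₀ ξ) A' L := by
      have := E_mono g hg0 heven hg1 ρ hρ0 A' r₀ hr₀A' hIH L [] (insert r₀ ξ)
        (by simpa using hVins)
        (fun p hp => ⟨fun h => (hmem p hp).1 (h ▸ hr₀), Finset.disjoint_right.mp (hmem p hp).2.2.2 hr₀⟩)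
      simpa using this
    have hV4 : Valid ξ A' (L ++ [(r₀, ξ)]) := by
      refine ⟨Finset.disjoint_of_subset_right hsub hdisj, ?_, ?_⟩
      · intro p hp
        rcases List.mem_append.mp hp with h | h
        · obtain ⟨h1, h2, h3, h4⟩ := hmem p h
          exact ⟨fun hh => h1 (hsub hh), h2, h3, Finset.disjoint_of_subset_right hsub h4⟩
        · rcases List.mem_singleton.mp h with rfl
          exact ⟨hr₀A', hrξ, hrξ, Finset.disjoint_of_subset_right hsub hdisj⟩
      · rw [List.pairwise_append]
        refine ⟨hpw, List.pairwise_singleton _ _, ?_⟩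
        intro p hp q hq
        rcases List.mem_singleton.mp hq with rfl
        exact fun h => (hmem p hp).1 (h ▸ hr₀)
    have h4 : 0 ≤ E g ρ ξ A' (L ++ [(r₀, ξ)]) := hIH _ _ hV4
    have hcoef : 0 ≤ ρ * cf g ξ r₀ := mul_nonneg hρ0 (cf_nonneg g hg0 ξ r₀)
    have h5 := mul_le_mul_of_nonneg_left e3 hcoef
    linarith

end
end LeeYangAux

/-- Lee–Yang positivity (Theorem 5.1 of the paper, lattice version on `ℤᵈ`):
if `g ≥ 1` off the origin, `g(0) = 0`, `g` is even, and all finite products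
`∏_{x ∈ S} g(x)` (with `0 ∉ S`) are bounded by `b`, then for `0 ≤ ρ ≤ 1/b`
the signed sum `Ξ(ξ)` over configurations `γ ⊆ Λ∖ξ` is nonnegative. -/
theorem leeYang_positivity
    {d : ℕ} (g : (Fin d → ℤ) → ℝ)
    (hg0 : ∀ x, 0 ≤ g x) (heven : ∀ x, g (-x) = g x) (hzero : g 0 = 0)
    (hg1 : ∀ x, x ≠ 0 → 1 ≤ g x)
    (b : ℝ) (hb1 : 1 ≤ b)
    (hb : ∀ S : Finset (Fin d → ℤ), (0 : Fin d → ℤ) ∉ S → ∏ x ∈ S, g x ≤ b)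
    (Λ ξ : Finset (Fin d → ℤ)) (hξ : ξ ⊆ Λ)
    (ρ : ℝ) (hρ0 : 0 ≤ ρ) (hρb : ρ ≤ 1 / b) :
    0 ≤ ∑ γ ∈ (Λ \ ξ).powerset,
      (-ρ) ^ γ.card *
        (∏ y ∈ γ, ∏ x ∈ γ.erase y, Real.sqrt (g (x - y))) *
        (∏ r ∈ ξ, ∏ y ∈ γ, g (r - y)) := by
  have hb0 : (0:ℝ) < b := lt_of_lt_of_le one_pos hb1
  have hρb1 : ρ * b ≤ 1 := by
    have := (le_div_iff₀ hb0).mp hρb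
    linarith
  have hkey := LeeYangAux.E_nonneg g hg0 heven hg1 b ρ hb hρ0 hρb1
    (Λ \ ξ).card (Λ \ ξ) le_rfl ξ []
    ⟨Finset.disjoint_sdiff, by simp, List.Pairwise.nil⟩
  have heq : LeeYangAux.E g ρ ξ (Λ \ ξ) [] = ∑ γ ∈ (Λ \ ξ).powerset,
      (-ρ) ^ γ.card *
        (∏ y ∈ γ, ∏ x ∈ γ.erase y, Real.sqrt (g (x - y))) *
        (∏ r ∈ ξ, ∏ y ∈ γ, g (r - y)) := by
    rw [LeeYangAux.E]
    refine Finset.sum_congr rfl fun γ _ => ?_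
    rw [LeeYangAux.term, LeeYangAux.Wf, LeeYangAux.Pf]
    simp only [List.map_nil, List.prod_nil, mul_one]
  rw [heq] at hkey
  exact hkey
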